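/- There exist a real Banach space X and an L-orthogonal sequence (x_n) in X such that for every nonprincipal ultrafilter U on ℕ that is not a Q-point, the weak*-limit of the sequence (ι(x_n)) along U in X** is not an L-orthogonal element of X**, where ι : X → X** is the canonical embedding. -/

import Mathlib

open NormedSpace

/-- `(x n)` is an `L`-orthogonal sequence in `X`: it lies in the closed unit ball and
`‖z + x n‖ → 1 + ‖z‖` for every `z ∈ X`. -/
def IsLOrthogonalSeq {X : Type} [NormedAddCommGroup X] [NormedSpace ℝ X] (x : ℕ → X) : Prop :=
  (∀ n, ‖x n‖ ≤ 1) ∧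
    ∀ z : X, Filter.Tendsto (fun n => ‖z + x n‖) Filter.atTop (nhds (1 + ‖z‖))

/-- `u ∈ X**` is an `L`-orthogonal element: `‖u‖ = 1` and `‖ι z + u‖ = 1 + ‖z‖`
for every `z ∈ X`. -/
def IsLOrthogonalElem {X : Type} [NormedAddCommGroup X] [NormedSpace ℝ X]
    (u : StrongDual ℝ (StrongDual ℝ X)) : Prop :=
  ‖u‖ = 1 ∧ ∀ z : X, ‖inclusionInDoubleDual ℝ X z + u‖ = 1 + ‖z‖

/-- `U` is a `Q`-point: for every partition of `ℕ` into nonempty finite sets there is a set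
in `U` meeting each piece in exactly one point. -/
def IsQPoint (U : Ultrafilter ℕ) : Prop :=
  ∀ A : ℕ → Set ℕ, (∀ n, (A n).Finite) → (∀ n, (A n).Nonempty) →
    Pairwise (Function.onFun Disjoint A) → (⋃ n, A n) = Set.univ →
    ∃ B ∈ U, ∀ n, (B ∩ A n).ncard = 1

/-- `X` carries an `L`-orthogonal sequence `(x n)` such that for every nonprincipal
ultrafilter `U` on `ℕ` that is not a `Q`-point, the weak*-limit of `(ι (x n))` along `U`
is not an `L`-orthogonal element of `X**`. -/
def HasBadLOrthogonalSeq (X : Type) [NormedAddCommGroup X] [NormedSpace ℝ X]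
    [CompleteSpace X] : Prop :=
  ∃ x : ℕ → X, IsLOrthogonalSeq x ∧
    ∀ U : Ultrafilter ℕ, (∀ n : ℕ, (U : Filter ℕ) ≠ pure n) → ¬ IsQPoint U →
      ∀ u : StrongDual ℝ (StrongDual ℝ X),
        Filter.Tendsto (fun n => StrongDual.toWeakDual (inclusionInDoubleDual ℝ X (x n)))
          (U : Filter ℕ) (nhds (StrongDual.toWeakDual u)) →
        ¬ IsLOrthogonalElem u




open Finsupp UniformSpace Filter

noncomputable section

namespace Stmt15

/-- block sup of `|v|` over the fiber of `c` at color `k`. -/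
def bs (c : ℕ → ℕ) (v : ℕ →₀ ℝ) (k : ℕ) : NNReal :=
  v.support.sup fun i => if c i = k then ‖v i‖₊ else 0

lemma bs_le {c : ℕ → ℕ} {v : ℕ →₀ ℝ} {k : ℕ} {M : NNReal} (h : ∀ i, ‖v i‖₊ ≤ M) :
    bs c v k ≤ M :=
  Finset.sup_le fun i _ => by split <;> [exact h i; exact zero_le]

lemma le_bs {c : ℕ → ℕ} {v : ℕ →₀ ℝ} {k : ℕ} (i : ℕ) (hik : c i = k) :
    ‖v i‖₊ ≤ bs c v k := by
  by_cases hv : v i = 0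
  · simp [hv]
  · unfold bs
    have := Finset.le_sup (f := fun i => if c i = k then ‖v i‖₊ else 0)
      (Finsupp.mem_support_iff.mpr hv)
    simpa [hik] using this

lemma bs_eq_zero {c : ℕ → ℕ} {v : ℕ →₀ ℝ} {k : ℕ} (h : ∀ i ∈ v.support, c i ≠ k) :
    bs c v k = 0 :=
  le_antisymm (Finset.sup_le fun i hi => by rw [if_neg (h i hi)]) (zero_le)

lemma bs_add_le (c : ℕ → ℕ) (v w : ℕ →₀ ℝ) (k : ℕ) :
    bs c (v + w) k ≤ bs c v k + bs c w k := by
  refine Finset.sup_le fun i _ => ?_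
  by_cases hik : c i = k
  · rw [if_pos hik]
    calc ‖(v + w) i‖₊ = ‖v i + w i‖₊ := by rw [Finsupp.add_apply]
    _ ≤ ‖v i‖₊ + ‖w i‖₊ := nnnorm_add_le _ _
    _ ≤ bs c v k + bs c w k := add_le_add (le_bs i hik) (le_bs i hik)
  · rw [if_neg hik]; exact zero_le

/-- the `c`-norm: sum over colors of the block sups. -/
def nnc (c : ℕ → ℕ) (v : ℕ →₀ ℝ) : NNReal :=
  ∑ k ∈ v.support.image c, bs c v k

lemma nnc_ext {c : ℕ → ℕ} {v : ℕ →₀ ℝ} {K : Finset ℕ} (hK : v.support.image c ⊆ K) :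
    nnc c v = ∑ k ∈ K, bs c v k :=
  Finset.sum_subset hK fun k _ hk =>
    bs_eq_zero fun i hi hik => hk (Finset.mem_image.mpr ⟨i, hi, hik⟩)

lemma nnc_zero (c : ℕ → ℕ) : nnc c 0 = 0 := by simp [nnc]

lemma nnc_add_le (c : ℕ → ℕ) (v w : ℕ →₀ ℝ) :
    nnc c (v + w) ≤ nnc c v + nnc c w := by
  classical
  set K := (v + w).support.image c ∪ (v.support.image c ∪ w.support.image c) with hKdef
  rw [nnc_ext (K := K) (Finset.subset_union_left),
      nnc_ext (K := K) (le_trans Finset.subset_union_left Finset.subset_union_right),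
      nnc_ext (K := K) (le_trans Finset.subset_union_right Finset.subset_union_right),
      ← Finset.sum_add_distrib]
  exact Finset.sum_le_sum fun k _ => bs_add_le c v w k

lemma nnc_single_one (c : ℕ → ℕ) (n : ℕ) : nnc c (Finsupp.single n (1 : ℝ)) = 1 := by
  classical
  rw [nnc, Finsupp.support_single_ne_zero n one_ne_zero, Finset.image_singleton,
    Finset.sum_singleton]
  unfold bs
  rw [Finsupp.support_single_ne_zero n one_ne_zero, Finset.sup_singleton, if_pos rfl,
    Finsupp.single_eq_same]
  norm_num

lemma nnc_le_card_smul {c : ℕ → ℕ} {v : ℕ →₀ ℝ} {M : NNReal} (hM : ∀ i, ‖v i‖₊ ≤ M) :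
    nnc c v ≤ (v.support.image c).card • M :=
  Finset.sum_le_card_nsmul _ _ M fun k _ => bs_le hM

lemma nnc_eq_zero {c : ℕ → ℕ} {v : ℕ →₀ ℝ} (h : nnc c v = 0) : v = 0 := by
  classical
  ext i
  by_contra hvi
  have hi : i ∈ v.support := Finsupp.mem_support_iff.mpr hvi
  have hterm : bs c v (c i) = 0 := by
    have := (Finset.sum_eq_zero_iff.mp h) (c i) (Finset.mem_image.mpr ⟨i, hi, rfl⟩)
    exact this
  have := le_bs (c := c) (v := v) i rfl
  rw [hterm, le_zero_iff, nnnorm_eq_zero] at this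
  exact hvi this

lemma nnc_neg (c : ℕ → ℕ) (v : ℕ →₀ ℝ) : nnc c (-v) = nnc c v := by
  have hsupp : (-v).support = v.support := Finsupp.support_neg v
  unfold nnc bs
  rw [hsupp]
  exact Finset.sum_congr rfl fun k _ => Finset.sup_congr rfl fun i _ => by
    simp [Finsupp.neg_apply]

lemma bs_smul_le (c : ℕ → ℕ) (r : ℝ) (v : ℕ →₀ ℝ) (k : ℕ) :
    bs c (r • v) k ≤ ‖r‖₊ * bs c v k := by
  refine Finset.sup_le fun i _ => ?_
  by_cases hik : c i = k
  · rw [if_pos hik]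
    calc ‖(r • v) i‖₊ = ‖r‖₊ * ‖v i‖₊ := by rw [Finsupp.smul_apply, smul_eq_mul, nnnorm_mul]
    _ ≤ ‖r‖₊ * bs c v k := mul_le_mul_right (le_bs i hik) _
  · rw [if_neg hik]; exact zero_le

lemma nnc_smul_le (c : ℕ → ℕ) (r : ℝ) (v : ℕ →₀ ℝ) :
    nnc c (r • v) ≤ ‖r‖₊ * nnc c v := by
  classical
  rw [nnc_ext (K := v.support.image c)
    (Finset.image_subset_image (Finsupp.support_smul)), nnc, Finset.mul_sum]
  exact Finset.sum_le_sum fun k _ => bs_smul_le c r v k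

lemma nnc_add_single {c : ℕ → ℕ} {v : ℕ →₀ ℝ} {n : ℕ} (hn : v n = 0)
    (hblock : ∀ i ∈ v.support, c i ≠ c n) :
    nnc c (v + Finsupp.single n (1 : ℝ)) = nnc c v + 1 := by
  classical
  have hnsupp : n ∉ v.support := fun h => Finsupp.mem_support_iff.mp h hn
  have hdis : Disjoint v.support (Finsupp.single n (1:ℝ)).support := by
    rw [Finsupp.support_single_ne_zero n one_ne_zero]
    simp [Finset.disjoint_singleton_right, hnsupp]
  have hsupp : (v + Finsupp.single n (1:ℝ)).support = v.support ∪ {n} := by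
    rw [Finsupp.support_add_eq hdis, Finsupp.support_single_ne_zero n one_ne_zero]
  have hcn : c n ∉ v.support.image c := by
    intro h
    obtain ⟨i, hi, hci⟩ := Finset.mem_image.mp h
    exact hblock i hi hci
  have happly : ∀ i ∈ v.support, (v + Finsupp.single n (1:ℝ)) i = v i := by
    intro i hi
    rw [Finsupp.add_apply, Finsupp.single_apply,
      if_neg (fun h : n = i => hblock i hi (by rw [← h]))]
    ring
  have hbs_eq : ∀ k ∈ v.support.image c, bs c (v + Finsupp.single n (1:ℝ)) k = bs c v k := by
    intro k hk
    have hkn : c n ≠ k := fun h => hcn (h ▸ hk)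
    unfold bs
    rw [hsupp, Finset.sup_union, Finset.sup_singleton, if_neg hkn]
    rw [sup_eq_left.mpr (zero_le)]
    exact Finset.sup_congr rfl fun i hi => by rw [happly i hi]
  have hbs_new : bs c (v + Finsupp.single n (1:ℝ)) (c n) = 1 := by
    unfold bs
    rw [hsupp, Finset.sup_union, Finset.sup_singleton, if_pos rfl]
    have h1 : (v.support.sup fun i =>
        if c i = c n then ‖(v + Finsupp.single n (1:ℝ)) i‖₊ else 0) = 0 := by
      refine le_antisymm (Finset.sup_le fun i hi => by rw [if_neg (hblock i hi)]) (zero_le)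
    rw [h1, Finsupp.add_apply, hn, Finsupp.single_eq_same, sup_eq_right.mpr (zero_le)]
    norm_num
  have himage : (v + Finsupp.single n (1:ℝ)).support.image c = v.support.image c ∪ {c n} := by
    rw [hsupp, Finset.image_union, Finset.image_singleton]
  rw [nnc, himage, Finset.sum_union (by simp [Finset.disjoint_singleton_right, hcn]),
    Finset.sum_singleton, hbs_new, nnc]
  rw [Finset.sum_congr rfl hbs_eq]


/-- the index type of all "partitions": finite-to-one colorings of `ℕ`. -/
def PP : Type := {c : ℕ → ℕ // ∀ k, (c ⁻¹' {k}).Finite}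

instance : Nonempty PP :=
  ⟨⟨id, fun k => (Set.finite_singleton k).subset fun i hi => by simpa using hi⟩⟩

/-- injectively many elements of `PP`. -/
def shiftc (m : ℕ) : PP :=
  ⟨fun i => i + m, fun k => (Set.finite_Iic k).subset fun i hi => by
    simp only [Set.mem_preimage, Set.mem_singleton_iff] at hi
    exact Set.mem_Iic.mpr (by omega)⟩

lemma shiftc_inj : Function.Injective shiftc := by
  intro m m' h
  have := congrArg (fun c : PP => c.1 0) h
  simpa [shiftc] using this

/-- the pre-Banach space: finitely many "partition coordinates" plus a diagonal part. -/
abbrev WW : Type := (PP →₀ (ℕ →₀ ℝ)) × (ℕ →₀ ℝ)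

/-- the seminorm associated to a partition `c`. -/
def qq (c : PP) (x : WW) : NNReal := nnc c.1 (x.1 c + x.2)

lemma qq_bound (x : WW) (c : PP) :
    qq c x ≤ (∑ c' ∈ x.1.support, ∑ i ∈ (x.1 c').support, ‖x.1 c' i‖₊)
      + ∑ i ∈ x.2.support, ‖x.2 i‖₊ := by
  classical
  have l1ext : ∀ (v : ℕ →₀ ℝ) (K : Finset ℕ), v.support ⊆ K →
      ∑ i ∈ v.support, ‖v i‖₊ = ∑ i ∈ K, ‖v i‖₊ := fun v K hK =>
    Finset.sum_subset hK fun i _ hi => by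
      rw [Finsupp.notMem_support_iff.mp hi, nnnorm_zero]
  have hle : ∀ v : ℕ →₀ ℝ, nnc c.1 v ≤ ∑ i ∈ v.support, ‖v i‖₊ := by
    intro v
    unfold nnc
    calc ∑ k ∈ v.support.image c.1, bs c.1 v k
        ≤ ∑ k ∈ v.support.image c.1, ∑ i ∈ v.support.filter (fun i => c.1 i = k), ‖v i‖₊ := by
          refine Finset.sum_le_sum fun k _ => Finset.sup_le fun i hi => ?_
          by_cases hik : c.1 i = k
          · rw [if_pos hik]
            exact Finset.single_le_sum (f := fun i => ‖v i‖₊) (fun _ _ => zero_le)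
              (Finset.mem_filter.mpr ⟨hi, hik⟩)
          · rw [if_neg hik]; exact zero_le
      _ = ∑ i ∈ v.support, ‖v i‖₊ := Finset.sum_fiberwise_of_maps_to
            (fun i hi => Finset.mem_image.mpr ⟨i, hi, rfl⟩) _
  have step : nnc c.1 (x.1 c + x.2) ≤
      (∑ i ∈ (x.1 c).support, ‖x.1 c i‖₊) + ∑ i ∈ x.2.support, ‖x.2 i‖₊ := by
    refine le_trans (hle _) ?_
    set K := (x.1 c + x.2).support ∪ ((x.1 c).support ∪ x.2.support) with hK
    rw [l1ext _ K Finset.subset_union_left,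
        l1ext (x.1 c) K (le_trans Finset.subset_union_left Finset.subset_union_right),
        l1ext x.2 K (le_trans Finset.subset_union_right Finset.subset_union_right),
        ← Finset.sum_add_distrib]
    refine Finset.sum_le_sum fun i _ => ?_
    rw [Finsupp.add_apply]
    exact nnnorm_add_le _ _
  refine le_trans step (add_le_add_left ?_ _)
  by_cases hc : c ∈ x.1.support
  · exact Finset.single_le_sum (f := fun c' => ∑ i ∈ (x.1 c').support, ‖x.1 c' i‖₊)
      (fun _ _ => zero_le) hc
  · rw [Finsupp.notMem_support_iff.mp hc]
    simp

/-- the norm on `WW`. -/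
def normW (x : WW) : ℝ := ⨆ c : PP, (qq c x : ℝ)

lemma qq_bddAbove (x : WW) : BddAbove (Set.range fun c : PP => (qq c x : ℝ)) := by
  refine ⟨((∑ c' ∈ x.1.support, ∑ i ∈ (x.1 c').support, ‖x.1 c' i‖₊)
      + ∑ i ∈ x.2.support, ‖x.2 i‖₊ : NNReal), ?_⟩
  rintro y ⟨c, rfl⟩
  exact_mod_cast qq_bound x c

lemma le_normW (x : WW) (c : PP) : (qq c x : ℝ) ≤ normW x := le_ciSup (qq_bddAbove x) c

lemma normW_le {x : WW} {B : ℝ} (h : ∀ c : PP, (qq c x : ℝ) ≤ B) : normW x ≤ B := ciSup_le h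

lemma qq_add_le (c : PP) (x y : WW) : qq c (x + y) ≤ qq c x + qq c y := by
  have : (x + y).1 c + (x + y).2 = (x.1 c + x.2) + (y.1 c + y.2) := by
    rw [Prod.fst_add, Prod.snd_add, Finsupp.add_apply]
    abel
  rw [qq, this]
  exact nnc_add_le _ _ _

lemma qq_neg (c : PP) (x : WW) : qq c (-x) = qq c x := by
  have : (-x).1 c + (-x).2 = -(x.1 c + x.2) := by
    rw [Prod.fst_neg, Prod.snd_neg, Finsupp.neg_apply]
    abel
  rw [qq, this, nnc_neg, qq]

lemma qq_zero (c : PP) : qq c (0 : WW) = 0 := by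
  rw [qq]
  simp [nnc_zero]

instance : NormedAddCommGroup WW :=
  AddGroupNorm.toNormedAddCommGroup
    { toFun := normW
      map_zero' := by
        rw [normW]
        have : ∀ c : PP, ((qq c (0:WW) : ℝ)) = 0 := fun c => by rw [qq_zero]; simp
        simp only [this]
        exact ciSup_const
      add_le' := fun x y => by
        refine normW_le fun c => ?_
        calc (qq c (x + y) : ℝ) ≤ (qq c x : ℝ) + (qq c y : ℝ) := by
              exact_mod_cast qq_add_le c x y
        _ ≤ normW x + normW y := add_le_add (le_normW x c) (le_normW y c)
      neg' := fun x => by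
        rw [normW, normW]
        exact iSup_congr fun c => by rw [qq_neg]
      eq_zero_of_map_eq_zero' := fun x hx => by
        have hq : ∀ c : PP, x.1 c + x.2 = 0 := by
          intro c
          refine nnc_eq_zero (c := c.1) ?_
          have h1 : (qq c x : ℝ) ≤ 0 := hx ▸ le_normW x c
          have h2 : (0:ℝ) ≤ (qq c x : ℝ) := (qq c x).coe_nonneg
          have : (qq c x : ℝ) = 0 := le_antisymm h1 h2
          exact_mod_cast this
        have hc0 : ∃ m : ℕ, shiftc m ∉ x.1.support := by
          by_contra h
          push_neg at h
          have : Set.range shiftc ⊆ ↑x.1.support := by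
            rintro _ ⟨m, rfl⟩; exact h m
          exact (Set.infinite_range_of_injective shiftc_inj)
            (Set.Finite.subset x.1.support.finite_toSet this)
        obtain ⟨m, hm⟩ := hc0
        have hx2 : x.2 = 0 := by
          have := hq (shiftc m)
          rwa [Finsupp.notMem_support_iff.mp hm, zero_add] at this
        have hx1 : x.1 = 0 := by
          ext c i
          have := hq c
          rw [hx2, add_zero] at this
          simp [this]
        exact Prod.ext hx1 hx2 }

lemma norm_def (x : WW) : ‖x‖ = normW x := rfl

instance : NormedSpace ℝ WW :=
  @NormedSpace.mk ℝ WW _ _ (Prod.instModule : Module ℝ WW) <| fun r x => by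
    rw [norm_def, norm_def]
    refine normW_le fun c => ?_
    have h1 : qq c (r • x) ≤ ‖r‖₊ * qq c x := by
      have : (r • x).1 c + (r • x).2 = r • (x.1 c + x.2) := by
        rw [Prod.smul_fst, Prod.smul_snd, Finsupp.smul_apply, smul_add]
      rw [qq, this]
      exact nnc_smul_le _ _ _
    calc (qq c (r • x) : ℝ) ≤ ‖r‖ * (qq c x : ℝ) := by exact_mod_cast h1
    _ ≤ ‖r‖ * normW x := by
        exact mul_le_mul_of_nonneg_left (le_normW x c) (norm_nonneg r)


lemma normW_en (n : ℕ) : ‖((0, Finsupp.single n (1:ℝ)) : WW)‖ = 1 := by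
  rw [norm_def, normW]
  have h : ∀ c : PP, (qq c ((0, Finsupp.single n (1:ℝ)) : WW) : ℝ) = 1 := by
    intro c
    have : qq c ((0, Finsupp.single n (1:ℝ)) : WW) = 1 := by
      rw [qq]
      have h0 : ((0, Finsupp.single n (1:ℝ)) : WW).1 c + ((0, Finsupp.single n (1:ℝ)) : WW).2
          = Finsupp.single n (1:ℝ) := by simp
      rw [h0]
      exact nnc_single_one c.1 n
    rw [this]
    norm_num
  simp only [h]
  exact ciSup_const

lemma tendstoW (x : WW) :
    Tendsto (fun n => ‖x + ((0, Finsupp.single n (1:ℝ)) : WW)‖) atTop (nhds (‖x‖ + 1)) := by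
  rw [Metric.tendsto_nhds]
  intro ε hε
  obtain ⟨c₀, hc₀⟩ : ∃ c : PP, ‖x‖ - ε/2 < (qq c x : ℝ) := by
    apply exists_lt_of_lt_ciSup (f := fun c : PP => (qq c x : ℝ))
    rw [norm_def, normW]
    have : (0:ℝ) < ε/2 := by linarith
    linarith [le_refl (⨆ c : PP, (qq c x : ℝ))]
  set v₀ : ℕ →₀ ℝ := x.1 c₀ + x.2 with hv₀
  have hSfin : (↑v₀.support ∪ ⋃ i ∈ (v₀.support : Set ℕ), c₀.1 ⁻¹' {c₀.1 i} : Set ℕ).Finite := by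
    refine Set.Finite.union v₀.support.finite_toSet ?_
    exact Set.Finite.biUnion v₀.support.finite_toSet fun i _ => c₀.2 _
  have hev : ∀ᶠ n in atTop,
      (n : ℕ) ∉ (↑v₀.support ∪ ⋃ i ∈ (v₀.support : Set ℕ), c₀.1 ⁻¹' {c₀.1 i} : Set ℕ) :=
    Nat.cofinite_eq_atTop ▸ hSfin.eventually_cofinite_notMem
  filter_upwards [hev] with n hn
  have hvn : v₀ n = 0 := by
    by_contra h
    exact hn (Or.inl (Finsupp.mem_support_iff.mpr h))
  have hbl : ∀ i ∈ v₀.support, c₀.1 i ≠ c₀.1 n := by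
    intro i hi h
    exact hn (Or.inr (Set.mem_biUnion hi (by simp [h])))
  have hupper : ‖x + ((0, Finsupp.single n (1:ℝ)) : WW)‖ ≤ ‖x‖ + 1 := by
    calc ‖x + ((0, Finsupp.single n (1:ℝ)) : WW)‖
        ≤ ‖x‖ + ‖((0, Finsupp.single n (1:ℝ)) : WW)‖ := norm_add_le _ _
    _ = ‖x‖ + 1 := by rw [normW_en]
  have hlow : (qq c₀ x : ℝ) + 1 ≤ ‖x + ((0, Finsupp.single n (1:ℝ)) : WW)‖ := by
    have hq : qq c₀ (x + ((0, Finsupp.single n (1:ℝ)) : WW)) = qq c₀ x + 1 := by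
      have h1 : (x + ((0, Finsupp.single n (1:ℝ)) : WW)).1 c₀
          + (x + ((0, Finsupp.single n (1:ℝ)) : WW)).2
          = v₀ + Finsupp.single n (1:ℝ) := by
        rw [Prod.fst_add, Prod.snd_add, Finsupp.add_apply, hv₀]
        simp [add_assoc]
      rw [qq, h1, nnc_add_single hvn hbl, qq]
    have := le_normW (x + ((0, Finsupp.single n (1:ℝ)) : WW)) c₀
    rw [hq] at this
    rw [norm_def]
    calc (qq c₀ x : ℝ) + 1 = ((qq c₀ x + 1 : NNReal) : ℝ) := by push_cast; ring
    _ ≤ _ := this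
  rw [Real.dist_eq, abs_lt]
  constructor <;> linarith

/-- the sequence. -/
def xseq (n : ℕ) : Completion WW := ((0, Finsupp.single n (1:ℝ)) : WW)

lemma norm_xseq (n : ℕ) : ‖xseq n‖ = 1 := by
  rw [xseq, Completion.norm_coe, normW_en]

lemma tendstoX (z : Completion WW) :
    Tendsto (fun n => ‖z + xseq n‖) atTop (nhds (1 + ‖z‖)) := by
  rw [Metric.tendsto_nhds]
  intro ε hε
  obtain ⟨v, hv⟩ := Completion.denseRange_coe.exists_dist_lt z (show (0:ℝ) < ε/3 by linarith)
  have h1 := tendstoW v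
  rw [Metric.tendsto_nhds] at h1
  filter_upwards [h1 (ε/3) (by linarith)] with n hn
  have e1 : ‖(v : Completion WW) + xseq n‖ = ‖v + ((0, Finsupp.single n (1:ℝ)) : WW)‖ := by
    rw [xseq, ← Completion.coe_add, Completion.norm_coe]
  have e2 : |‖z + xseq n‖ - ‖(v : Completion WW) + xseq n‖| ≤ ‖z - (v : Completion WW)‖ := by
    have h := abs_norm_sub_norm_le (z + xseq n) ((v : Completion WW) + xseq n)
    rwa [add_sub_add_right_eq_sub] at h
  have e3 : |‖(v : Completion WW)‖ - ‖z‖| ≤ ‖z - (v : Completion WW)‖ := by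
    have h := abs_norm_sub_norm_le ((v : Completion WW)) z
    rwa [norm_sub_rev] at h
  rw [dist_eq_norm] at hv
  rw [Real.dist_eq, abs_lt] at hn ⊢
  rw [abs_le] at e2 e3
  have e4 : ‖(v : Completion WW)‖ = ‖v‖ := Completion.norm_coe v
  rw [e1] at e2
  constructor <;> [nlinarith [e2.1, e2.2, e3.1, e3.2, hn.1, hn.2];
    nlinarith [e2.1, e2.2, e3.1, e3.2, hn.1, hn.2]]

lemma norm_zel (cA : PP) :
    ‖((Finsupp.single cA (Finsupp.single 0 (1:ℝ)), 0) : WW)‖ = 1 := by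
  set x : WW := (Finsupp.single cA (Finsupp.single 0 (1:ℝ)), 0) with hx
  have hcA : qq cA x = 1 := by
    rw [qq]
    have : x.1 cA + x.2 = Finsupp.single 0 (1:ℝ) := by
      rw [hx]; simp
    rw [this, nnc_single_one]
  refine le_antisymm (normW_le fun c => ?_) ?_
  · by_cases hc : cA = c
    · subst hc; rw [hcA]; norm_num
    · have : qq c x = 0 := by
        rw [qq]
        have : x.1 c + x.2 = 0 := by
          rw [hx]; simp [Finsupp.single_eq_of_ne' hc]
        rw [this, nnc_zero]
      rw [this]; norm_num
  · have := le_normW x cA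
    rw [hcA] at this
    simp at this; exact this

lemma norm_Eel_le (cA : PP) {n m : ℕ} (hnm : n ≠ m) (hn0 : n ≠ 0) (hm0 : m ≠ 0)
    (hblock : cA.1 n = cA.1 m) :
    ‖((Finsupp.single cA (Finsupp.single 0 (1:ℝ)),
        Finsupp.single n (1:ℝ) + Finsupp.single m (1:ℝ)) : WW)‖ ≤ 2 := by
  classical
  rw [norm_def]
  refine normW_le fun c => ?_
  have key : qq c ((Finsupp.single cA (Finsupp.single 0 (1:ℝ)),
      Finsupp.single n (1:ℝ) + Finsupp.single m (1:ℝ)) : WW) ≤ 2 := by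
    rw [qq]
    by_cases hc : cA = c
    · subst hc
      rw [Finsupp.single_eq_same]
      set v : ℕ →₀ ℝ :=
        Finsupp.single 0 (1:ℝ) + (Finsupp.single n (1:ℝ) + Finsupp.single m (1:ℝ)) with hvdef
      have hM : ∀ i, ‖v i‖₊ ≤ 1 := by
        intro i
        rw [hvdef]
        simp only [Finsupp.add_apply, Finsupp.single_apply]
        split_ifs <;> simp_all <;> norm_num
      have hsupp : v.support ⊆ ({0, n, m} : Finset ℕ) := by
        refine (Finsupp.support_add).trans ?_
        refine Finset.union_subset ?_ ((Finsupp.support_add).trans (Finset.union_subset ?_ ?_))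
        · exact (Finsupp.support_single_subset).trans (by intro i hi; simp_all)
        · exact (Finsupp.support_single_subset).trans (by intro i hi; simp_all)
        · exact (Finsupp.support_single_subset).trans (by intro i hi; simp_all)
      have himg : v.support.image cA.1 ⊆ ({cA.1 0, cA.1 n} : Finset ℕ) := by
        intro k hk
        obtain ⟨i, hi, rfl⟩ := Finset.mem_image.mp hk
        have := hsupp hi
        simp only [Finset.mem_insert, Finset.mem_singleton] at this ⊢
        rcases this with h | h | h
        · subst h; left; rfl
        · subst h; right; rfl
        · subst h; right; exact hblock.symm
      calc nnc cA.1 v ≤ (v.support.image cA.1).card • (1 : NNReal) := nnc_le_card_smul hM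
      _ = ((v.support.image cA.1).card : NNReal) := by rw [nsmul_eq_mul, mul_one]
      _ ≤ 2 := by
          have h1 : (v.support.image cA.1).card ≤ ({cA.1 0, cA.1 n} : Finset ℕ).card :=
            Finset.card_le_card himg
          have h2 : ({cA.1 0, cA.1 n} : Finset ℕ).card ≤ 2 :=
            (Finset.card_insert_le _ _).trans (by simp)
          exact_mod_cast h1.trans h2
    · rw [Finsupp.single_eq_of_ne' hc, zero_add]
      set v : ℕ →₀ ℝ := Finsupp.single n (1:ℝ) + Finsupp.single m (1:ℝ) with hvdef
      have hM : ∀ i, ‖v i‖₊ ≤ 1 := by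
        intro i
        rw [hvdef]
        simp only [Finsupp.add_apply, Finsupp.single_apply]
        split_ifs <;> simp_all <;> norm_num
      have hsupp : v.support ⊆ ({n, m} : Finset ℕ) := by
        refine (Finsupp.support_add).trans (Finset.union_subset ?_ ?_)
        · exact (Finsupp.support_single_subset).trans (by intro i hi; simp_all)
        · exact (Finsupp.support_single_subset).trans (by intro i hi; simp_all)
      calc nnc c.1 v ≤ (v.support.image c.1).card • (1 : NNReal) := nnc_le_card_smul hM
      _ = ((v.support.image c.1).card : NNReal) := by rw [nsmul_eq_mul, mul_one]
      _ ≤ 2 := by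
          have h1 : (v.support.image c.1).card ≤ (({n, m} : Finset ℕ).image c.1).card :=
            Finset.card_le_card (Finset.image_subset_image hsupp)
          have h2 : (({n, m} : Finset ℕ).image c.1).card ≤ 2 :=
            (Finset.card_image_le).trans (by
              exact (Finset.card_insert_le _ _).trans (by simp))
          exact_mod_cast h1.trans h2
  exact_mod_cast key


lemma main : HasBadLOrthogonalSeq (Completion WW) := by
  classical
  refine ⟨xseq, ⟨fun n => le_of_eq (norm_xseq n), tendstoX⟩, ?_⟩
  intro U hU _hQ u hconv hu
  apply _hQ
  intro A hAfin hAne hAdisj hAcover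
  -- the coloring associated to the partition
  have hmem : ∀ i : ℕ, ∃ k, i ∈ A k := by
    intro i
    have : i ∈ ⋃ n, A n := hAcover ▸ Set.mem_univ i
    exact Set.mem_iUnion.mp this
  choose g hg using hmem
  have hgeq : ∀ i k, i ∈ A k → g i = k := by
    intro i k hik
    by_contra hne
    exact Set.disjoint_left.mp (hAdisj hne) (hg i) hik
  have hfib : ∀ k, (g ⁻¹' {k}).Finite := by
    intro k
    refine (hAfin k).subset fun i hi => ?_
    have : g i = k := hi
    exact this ▸ hg i
  set cA : PP := ⟨g, hfib⟩ with hcA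
  set z : Completion WW :=
    (((Finsupp.single cA (Finsupp.single 0 (1:ℝ)), 0) : WW) : Completion WW) with hzdef
  have hz : ‖z‖ = 1 := by rw [hzdef, Completion.norm_coe, norm_zel]
  have h2 : (2 - 1/16 : ℝ) < ‖inclusionInDoubleDual ℝ (Completion WW) z + u‖ := by
    rw [hu.2 z, hz]; norm_num
  obtain ⟨f₀, hf₀1, hf₀2⟩ :=
    (inclusionInDoubleDual ℝ (Completion WW) z + u).exists_lt_apply_of_lt_opNorm h2
  have hev : ∀ w : StrongDual ℝ (Completion WW),
      (inclusionInDoubleDual ℝ (Completion WW) z + u) w = w z + u w := by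
    intro w
    rw [ContinuousLinearMap.add_apply, NormedSpace.dual_def]
  obtain ⟨f, hf1, hkey⟩ : ∃ f : StrongDual ℝ (Completion WW), ‖f‖ ≤ 1 ∧ 2 - 1/16 < f z + u f := by
    rw [hev f₀, Real.norm_eq_abs] at hf₀2
    rcases le_or_gt 0 (f₀ z + u f₀) with hsgn | hsgn
    · exact ⟨f₀, hf₀1.le, by rwa [abs_of_nonneg hsgn] at hf₀2⟩
    · refine ⟨-f₀, by rw [norm_neg]; exact hf₀1.le, ?_⟩
      have hh1 : (-f₀) z = -(f₀ z) := by simp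
      have hh2 : u (-f₀) = -(u f₀) := by simp
      rw [hh1, hh2, abs_of_neg hsgn] at *
      linarith
  set φ : ℕ → ℝ := fun n => f (xseq n) with hφdef
  have hφle : ∀ n, φ n ≤ 1 := by
    intro n
    calc φ n ≤ |φ n| := le_abs_self _
    _ = ‖f (xseq n)‖ := (Real.norm_eq_abs _).symm
    _ ≤ ‖f‖ * ‖xseq n‖ := f.le_opNorm _
    _ ≤ 1 * 1 := by rw [norm_xseq]; exact mul_le_mul_of_nonneg_right hf1 zero_le_one
    _ = 1 := one_mul 1
  have hφconv : Tendsto φ (U : Filter ℕ) (nhds (u f)) := by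
    have hc := ((WeakDual.eval_continuous (𝕜 := ℝ) (E := StrongDual ℝ (Completion WW)) f).tendsto
      (StrongDual.toWeakDual u)).comp hconv
    exact hc
  have huf_le : u f ≤ 1 := le_of_tendsto hφconv (Filter.Eventually.of_forall hφle)
  have hfz_le : f z ≤ 1 := by
    calc f z ≤ |f z| := le_abs_self _
    _ = ‖f z‖ := (Real.norm_eq_abs _).symm
    _ ≤ ‖f‖ * ‖z‖ := f.le_opNorm _
    _ ≤ 1 * 1 := by rw [hz]; exact mul_le_mul_of_nonneg_right hf1 zero_le_one
    _ = 1 := one_mul 1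
  have hfz_lb : 1 - 1/16 < f z := by linarith
  set B : Set ℕ := {n | 1 - 1/8 < φ n} with hBdef
  have hB : B ∈ U := by
    by_contra hBn
    have hBc : Bᶜ ∈ U := Ultrafilter.compl_mem_iff_notMem.mpr hBn
    have : ∀ᶠ n in (U : Filter ℕ), φ n ≤ 1 - 1/8 := by
      refine Filter.eventually_of_mem hBc fun n hn => ?_
      have : ¬ (1 - 1/8 < φ n) := hn
      linarith [not_lt.mp this]
    have : u f ≤ 1 - 1/8 := le_of_tendsto hφconv this
    linarith
  have h0c : ({0}ᶜ : Set ℕ) ∈ U := by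
    by_contra h
    have h0 : ({0} : Set ℕ) ∈ U := by
      by_contra h'
      exact h (Ultrafilter.compl_mem_iff_notMem.mpr h')
    obtain ⟨a, ha, hUa⟩ := Ultrafilter.eq_pure_of_finite_mem (Set.finite_singleton 0) h0
    apply hU 0
    rw [Set.mem_singleton_iff] at ha
    rw [hUa, ha, Ultrafilter.coe_pure]
  set B' : Set ℕ := B ∩ {0}ᶜ with hB'def
  have hB' : B' ∈ U := Filter.inter_mem hB h0c
  -- B' meets each block at most once
  have hsub : ∀ k, ∀ n ∈ B' ∩ A k, ∀ m ∈ B' ∩ A k, n = m := by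
    intro k n hn m hm
    by_contra hnm
    have hn0 : n ≠ 0 := hn.1.2
    have hm0 : m ≠ 0 := hm.1.2
    have hφn : 1 - 1/8 < φ n := hn.1.1
    have hφm : 1 - 1/8 < φ m := hm.1.1
    have hblock : cA.1 n = cA.1 m := by
      have h1 : g n = k := hgeq n k hn.2
      have h2 : g m = k := hgeq m k hm.2
      rw [hcA]
      simp only []
      rw [h1, h2]
    set E : WW := (Finsupp.single cA (Finsupp.single 0 (1:ℝ)),
      Finsupp.single n (1:ℝ) + Finsupp.single m (1:ℝ)) with hEdef
    have hEsplit : (E : Completion WW) = z + xseq n + xseq m := by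
      have : E = ((Finsupp.single cA (Finsupp.single 0 (1:ℝ)), 0) : WW)
          + ((0, Finsupp.single n (1:ℝ)) : WW) + ((0, Finsupp.single m (1:ℝ)) : WW) :=
        Prod.ext (by simp only [hEdef]; ext; simp)
          ((congrArg (fun t => t + Finsupp.single m (1:ℝ)) (zero_add _)).symm)
      rw [this, Completion.coe_add, Completion.coe_add, hzdef, xseq, xseq]
    have hfE_ub : f (E : Completion WW) ≤ 2 := by
      calc f (E : Completion WW) ≤ |f (E : Completion WW)| := le_abs_self _
      _ = ‖f (E : Completion WW)‖ := (Real.norm_eq_abs _).symm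
      _ ≤ ‖f‖ * ‖(E : Completion WW)‖ := f.le_opNorm _
      _ ≤ 1 * 2 := by
          refine mul_le_mul hf1 ?_ (norm_nonneg _) zero_le_one
          rw [Completion.norm_coe]
          exact norm_Eel_le cA hnm hn0 hm0 hblock
      _ = 2 := one_mul 2
    have hfE_lb : f (E : Completion WW) = f z + φ n + φ m := by
      rw [hEsplit, map_add, map_add, hφdef]
    rw [hfE_lb] at hfE_ub
    linarith
  -- build the selector
  choose s hs using hAne
  set Bsel : Set ℕ := B' ∪ (s '' {k | ¬ (B' ∩ A k).Nonempty}) with hBsel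
  refine ⟨Bsel, Filter.mem_of_superset hB' Set.subset_union_left, ?_⟩
  intro k
  by_cases hk : (B' ∩ A k).Nonempty
  · have heq : Bsel ∩ A k = B' ∩ A k := by
      ext x
      constructor
      · rintro ⟨hx1, hx2⟩
        rcases hx1 with hx1 | hx1
        · exact ⟨hx1, hx2⟩
        · obtain ⟨j, hj, rfl⟩ := hx1
          have hjk : j = k := by
            by_contra hne
            exact Set.disjoint_left.mp (hAdisj hne) (hs j) hx2
          exact absurd (hjk ▸ hk) hj
      · rintro ⟨hx1, hx2⟩
        exact ⟨Or.inl hx1, hx2⟩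
    rw [heq]
    obtain ⟨a, ha⟩ := hk
    rw [Set.ncard_eq_one]
    refine ⟨a, ?_⟩
    ext x
    simp only [Set.mem_singleton_iff]
    constructor
    · intro hx
      exact hsub k x hx a ha
    · rintro rfl
      exact ha
  · have heq : Bsel ∩ A k = {s k} := by
      ext x
      constructor
      · rintro ⟨hx1, hx2⟩
        rcases hx1 with hx1 | hx1
        · exact absurd ⟨x, hx1, hx2⟩ hk
        · obtain ⟨j, hj, rfl⟩ := hx1
          have hjk : j = k := by
            by_contra hne
            exact Set.disjoint_left.mp (hAdisj hne) (hs j) hx2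
          exact Set.mem_singleton_iff.mpr (congrArg s hjk)
      · rintro rfl
        exact ⟨Or.inr ⟨k, hk, rfl⟩, hs k⟩
    rw [heq, Set.ncard_singleton]

end Stmt15

end

/-- There exist a real Banach space `X` and an `L`-orthogonal sequence
`(x n)` in `X` such that for every nonprincipal ultrafilter `U` on `ℕ` that is not a
`Q`-point, the weak*-limit of `(ι (x n))` along `U` in `X**` is not an `L`-orthogonal
element of `X**`. -/
theorem stmt15 :
    ∃ (X : Type) (nX : NormedAddCommGroup X)
      (nsX : @NormedSpace ℝ X _ nX.toSeminormedAddCommGroup)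
      (cX : @CompleteSpace X nX.toMetricSpace.toPseudoMetricSpace.toUniformSpace),
      @HasBadLOrthogonalSeq X nX nsX cX :=
  ⟨UniformSpace.Completion Stmt15.WW, inferInstance, inferInstance, inferInstance, Stmt15.main⟩
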